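/- Fix an integer d ≥ 2, real ν, η ≥ 0, and a finite set G ⊂ ℤ^d \ {0} with G = −G. Suppose the families (γ_k)_{k∈G}, (β_k)_{k∈G} of differentiable ℂ^d-valued functions solve the Galerkin MHD system on [0,T) and satisfy, for every t ∈ [0,T) and every k ∈ G, the reality and divergence-free conditions: γ_{−k}(t) = conj(γ_k(t)), β_{−k}(t) = conj(β_k(t)), k·γ_k(t) = 0, k·β_k(t) = 0. Set E(t) := Σ_{k∈G} ( |γ_k(t)|² + |β_k(t)|² ). Then for all t ∈ [0,T): E'(t) = −2·Σ_{k∈G} |k|²·( ν·|γ_k(t)|² + η·|β_k(t)|² ) ≤ −2·min(ν,η)·E(t); consequently E(t) ≤ E(0)·e^{−2·min(ν,η)·t} for all t ∈ [0,T), and if ν = η = 0 then E(t) = E(0) for all t ∈ [0,T). -/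

import Mathlib

noncomputable section

/-- Bilinear "dot product" (no conjugation) of an integer mode `k` with a vector `x ∈ ℂ^d`. -/
def zdot {d : ℕ} (k : Fin d → ℤ) (x : EuclideanSpace ℂ (Fin d)) : ℂ :=
  ∑ i, (k i : ℂ) * x i

/-- Squared Euclidean norm `|k|²` of an integer mode. -/
def knormSq {d : ℕ} (k : Fin d → ℤ) : ℝ := ∑ i, ((k i : ℝ)) ^ 2

/-- The integer mode `k` regarded as a vector of `ℂ^d`. -/
def intVec {d : ℕ} (k : Fin d → ℤ) : EuclideanSpace ℂ (Fin d) := WithLp.toLp 2 (fun i => (k i : ℂ))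

/-- The Leray projection `ℒ_k x = x - ((k·x)/|k|²) k` on Fourier mode `k`. -/
def leray {d : ℕ} (k : Fin d → ℤ) (x : EuclideanSpace ℂ (Fin d)) : EuclideanSpace ℂ (Fin d) :=
  x - ((zdot k x) / ((knormSq k : ℝ) : ℂ)) • intVec k

/-- The time domain `[0, T)`, `T ∈ (0, +∞]`. -/
def galDomain (T : EReal) : Set ℝ := {t : ℝ | 0 ≤ t ∧ (t : EReal) < T}

/-- A solution of the Galerkin MHD system on `[0,T)` supported by the finite mode set `G`:
families `γ_k, β_k` (extended by `0` outside `G`) solving, for `k ∈ G`,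
`dγ_k/dt = -ν|k|²γ_k - i(2π)^{-d/2} Σ_{h∈G} [(γ_h·(k-h)) ℒ_k γ_{k-h} - (β_h·(k-h)) ℒ_k β_{k-h}]`,
`dβ_k/dt = -η|k|²β_k - i(2π)^{-d/2} Σ_{h∈G} [(γ_h·(k-h)) ℒ_k β_{k-h} - (β_h·(k-h)) ℒ_k γ_{k-h}]`. -/
def IsGalerkinSolution {d : ℕ} (ν η : ℝ) (G : Finset (Fin d → ℤ)) (T : EReal)
    (γ β : (Fin d → ℤ) → ℝ → EuclideanSpace ℂ (Fin d)) : Prop :=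
  (∀ k : Fin d → ℤ, k ∉ G → ∀ t : ℝ, γ k t = 0 ∧ β k t = 0) ∧
  (∀ k ∈ G, ∀ t ∈ galDomain T,
    HasDerivWithinAt (γ k)
      (((-(ν * knormSq k) : ℝ) : ℂ) • γ k t
        - (Complex.I * ((((2 * Real.pi) ^ (-(d : ℝ) / 2) : ℝ)) : ℂ)) •
          ∑ h ∈ G, (zdot (k - h) (γ h t) • leray k (γ (k - h) t)
                    - zdot (k - h) (β h t) • leray k (β (k - h) t)))
      (galDomain T) t ∧
    HasDerivWithinAt (β k)
      (((-(η * knormSq k) : ℝ) : ℂ) • β k t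
        - (Complex.I * ((((2 * Real.pi) ^ (-(d : ℝ) / 2) : ℝ)) : ℂ)) •
          ∑ h ∈ G, (zdot (k - h) (γ h t) • leray k (β (k - h) t)
                    - zdot (k - h) (β h t) • leray k (γ (k - h) t)))
      (galDomain T) t)

end

noncomputable section GalAux

local notation "⟪" x ", " y "⟫" => @inner ℂ _ _ x y

variable {d : ℕ}

def pdot (x y : EuclideanSpace ℂ (Fin d)) : ℂ := ∑ i, x i * y i

lemma pdot_comm (x y : EuclideanSpace ℂ (Fin d)) : pdot x y = pdot y x :=
  Finset.sum_congr rfl fun i _ => mul_comm _ _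

lemma pdot_zero_right (x : EuclideanSpace ℂ (Fin d)) : pdot x (0 : EuclideanSpace ℂ (Fin d)) = 0 := by
  simp [pdot]

lemma zdot_sub (k h : Fin d → ℤ) (x : EuclideanSpace ℂ (Fin d)) :
    zdot (k - h) x = zdot k x - zdot h x := by
  unfold zdot
  rw [← Finset.sum_sub_distrib]
  refine Finset.sum_congr rfl fun i _ => ?_
  have : (k - h) i = k i - h i := rfl
  rw [this]; push_cast; ring

lemma zdot_neg (k : Fin d → ℤ) (x : EuclideanSpace ℂ (Fin d)) : zdot (-k) x = - zdot k x := by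
  unfold zdot
  rw [← Finset.sum_neg_distrib]
  refine Finset.sum_congr rfl fun i _ => ?_
  have : (-k) i = -(k i) := rfl
  rw [this]; push_cast; ring

lemma zdot_zero_vec (k : Fin d → ℤ) : zdot k (0 : EuclideanSpace ℂ (Fin d)) = 0 := by
  simp [zdot]

lemma inner_eq_sum (x y : EuclideanSpace ℂ (Fin d)) :
    ⟪x, y⟫ = ∑ i, (starRingEnd ℂ) (x i) * y i := by
  simp [PiLp.inner_apply, RCLike.inner_apply]
  exact Finset.sum_congr rfl fun i _ => mul_comm _ _

lemma inner_intVec (k : Fin d → ℤ) (x : EuclideanSpace ℂ (Fin d)) (hx : zdot k x = 0) :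
    ⟪x, intVec k⟫ = 0 := by
  have h : ⟪x, intVec k⟫ = (starRingEnd ℂ) (zdot k x) := by
    rw [inner_eq_sum, zdot, map_sum]
    refine Finset.sum_congr rfl fun i _ => ?_
    rw [map_mul, map_intCast]
    simp [intVec, mul_comm]
  rw [h, hx, map_zero]

lemma inner_leray (k : Fin d → ℤ) (x y : EuclideanSpace ℂ (Fin d)) (hx : zdot k x = 0) :
    ⟪x, leray k y⟫ = ⟪x, y⟫ := by
  unfold leray
  rw [inner_sub_right, inner_smul_right, inner_intVec k x hx, mul_zero, sub_zero]

lemma inner_eq_pdot (x w y : EuclideanSpace ℂ (Fin d))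
    (hw : ∀ i, w i = (starRingEnd ℂ) (x i)) : ⟪x, y⟫ = pdot w y := by
  rw [inner_eq_sum]
  exact Finset.sum_congr rfl fun i _ => by rw [hw i]

def trilin (G : Finset (Fin d → ℤ)) (u v w : (Fin d → ℤ) → EuclideanSpace ℂ (Fin d)) : ℂ :=
  ∑ k ∈ G, ∑ h ∈ G, zdot (k - h) (u h) * pdot (w (-k)) (v (k - h))

lemma trilin_skew {G : Finset (Fin d → ℤ)} (hsym : ∀ k ∈ G, -k ∈ G)
    (u v w : (Fin d → ℤ) → EuclideanSpace ℂ (Fin d))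
    (hv0 : ∀ k, k ∉ G → v k = 0) (hw0 : ∀ k, k ∉ G → w k = 0)
    (hdiv : ∀ h ∈ G, zdot h (u h) = 0) :
    trilin G u v w = - trilin G u w v := by
  classical
  unfold trilin
  rw [← Finset.sum_product' (f := fun k h => zdot (k - h) (u h) * pdot (w (-k)) (v (k - h))),
      ← Finset.sum_product' (f := fun k h => zdot (k - h) (u h) * pdot (v (-k)) (w (k - h)))]
  set P := (G ×ˢ G).filter (fun p => p.1 - p.2 ∈ G) with hPdef
  have hmemP : ∀ p : (Fin d → ℤ) × (Fin d → ℤ), p ∈ P ↔ p.1 ∈ G ∧ p.2 ∈ G ∧ p.1 - p.2 ∈ G := by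
    intro p
    simp [hPdef, Finset.mem_filter, Finset.mem_product, and_assoc]
  have h1 : ∑ p ∈ G ×ˢ G, zdot (p.1 - p.2) (u p.2) * pdot (w (-p.1)) (v (p.1 - p.2))
      = ∑ p ∈ P, zdot (p.1 - p.2) (u p.2) * pdot (w (-p.1)) (v (p.1 - p.2)) := by
    refine (Finset.sum_filter_of_ne ?_).symm
    intro p _ hne
    by_contra hnot
    exact hne (by rw [hv0 _ hnot, pdot_zero_right, mul_zero])
  have h2 : ∑ p ∈ G ×ˢ G, zdot (p.1 - p.2) (u p.2) * pdot (v (-p.1)) (w (p.1 - p.2))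
      = ∑ p ∈ P, zdot (p.1 - p.2) (u p.2) * pdot (v (-p.1)) (w (p.1 - p.2)) := by
    refine (Finset.sum_filter_of_ne ?_).symm
    intro p _ hne
    by_contra hnot
    exact hne (by rw [hw0 _ hnot, pdot_zero_right, mul_zero])
  rw [h1, h2, ← Finset.sum_neg_distrib]
  refine Finset.sum_nbij' (fun p => (p.2 - p.1, p.2)) (fun p => (p.2 - p.1, p.2)) ?_ ?_ ?_ ?_ ?_
  · intro p hp
    obtain ⟨hp1, hp2, hp3⟩ := (hmemP p).1 hp
    refine (hmemP _).2 ⟨?_, hp2, ?_⟩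
    · simpa [neg_sub] using hsym _ hp3
    · simpa [sub_sub_cancel_left] using hsym _ hp1
  · intro p hp
    obtain ⟨hp1, hp2, hp3⟩ := (hmemP p).1 hp
    refine (hmemP _).2 ⟨?_, hp2, ?_⟩
    · simpa [neg_sub] using hsym _ hp3
    · simpa [sub_sub_cancel_left] using hsym _ hp1
  · intro p _; simp [sub_sub_cancel]
  · intro p _; simp [sub_sub_cancel]
  · intro p hp
    obtain ⟨hp1, hp2, hp3⟩ := (hmemP p).1 hp
    have e1 : p.2 - p.1 - p.2 = -p.1 := by abel
    have e2 : -(p.2 - p.1) = p.1 - p.2 := by abel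
    simp only [e1, e2]
    rw [zdot_neg, zdot_sub, hdiv _ hp2, sub_zero, pdot_comm]
    ring

lemma knormSq_nonneg (k : Fin d → ℤ) : 0 ≤ knormSq k :=
  Finset.sum_nonneg fun i _ => sq_nonneg _

lemma one_le_knormSq {k : Fin d → ℤ} (hk : k ≠ 0) : 1 ≤ knormSq k := by
  obtain ⟨i, hi⟩ : ∃ i, k i ≠ 0 := by
    by_contra h; push_neg at h; exact hk (funext h)
  have h1 : (1 : ℝ) ≤ |(k i : ℝ)| := by
    have := Int.one_le_abs hi
    calc (1 : ℝ) = ((1 : ℤ) : ℝ) := by norm_num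
    _ ≤ ((|k i| : ℤ) : ℝ) := by exact_mod_cast this
    _ = |(k i : ℝ)| := by push_cast; ring
  have h2 : (1 : ℝ) ≤ (k i : ℝ) ^ 2 := by nlinarith [sq_abs ((k i : ℝ))]
  calc (1 : ℝ) ≤ (k i : ℝ) ^ 2 := h2
  _ ≤ knormSq k := Finset.single_le_sum (fun j _ => sq_nonneg ((k j : ℝ))) (Finset.mem_univ i)

lemma decay_helper {T : EReal} {F F' : ℝ → ℝ}
    (hF : ∀ x ∈ galDomain T, HasDerivWithinAt F (F' x) (galDomain T) x)
    (hF' : ∀ x ∈ galDomain T, F' x ≤ 0) {t : ℝ} (ht : t ∈ galDomain T) : F t ≤ F 0 := by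
  rcases eq_or_lt_of_le ht.1 with h0 | h0
  · rw [← h0]
  · have hsub : Set.Icc (0 : ℝ) t ⊆ galDomain T := by
      intro x hx
      exact ⟨hx.1, lt_of_le_of_lt (EReal.coe_le_coe_iff.mpr hx.2) ht.2⟩
    have hIoo : Set.Ioo (0 : ℝ) t ⊆ galDomain T := by
      intro x hx
      exact ⟨hx.1.le, lt_trans (EReal.coe_lt_coe_iff.mpr hx.2) ht.2⟩
    have hderivAt : ∀ x ∈ Set.Ioo (0 : ℝ) t, HasDerivAt F (F' x) x := by
      intro x hx
      have hnhds : galDomain T ∈ nhds x := by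
        rw [mem_nhds_iff]
        exact ⟨Set.Ioo 0 t, hIoo, isOpen_Ioo, hx⟩
      exact (hF x (hIoo hx)).hasDerivAt hnhds
    have hanti : AntitoneOn F (Set.Icc (0 : ℝ) t) := by
      apply antitoneOn_of_deriv_nonpos (convex_Icc 0 t)
      · intro x hx
        exact ((hF x (hsub hx)).continuousWithinAt).mono hsub
      · intro x hx
        rw [interior_Icc] at hx
        exact (hderivAt x hx).differentiableAt.differentiableWithinAt
      · intro x hx
        rw [interior_Icc] at hx
        rw [(hderivAt x hx).deriv]
        exact hF' x (hIoo hx)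
    exact hanti (Set.left_mem_Icc.mpr h0.le) (Set.right_mem_Icc.mpr h0.le) h0.le

end GalAux

noncomputable section GalAux2

local notation "⟪" x ", " y "⟫" => @inner ℂ _ _ x y

variable {d : ℕ}

lemma inner_rhs (k : Fin d → ℤ) (G : Finset (Fin d → ℤ)) (cc : ℂ) (r : ℝ)
    (x w : EuclideanSpace ℂ (Fin d)) (a p b q : (Fin d → ℤ) → EuclideanSpace ℂ (Fin d))
    (hx : zdot k x = 0) (hw : ∀ i, w i = (starRingEnd ℂ) (x i)) :
    ⟪x, (r : ℂ) • x - cc • ∑ h ∈ G,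
        (zdot (k - h) (a h) • leray k (p (k - h)) - zdot (k - h) (b h) • leray k (q (k - h)))⟫
    = ((r * ‖x‖ ^ 2 : ℝ) : ℂ)
      - cc * ∑ h ∈ G, (zdot (k - h) (a h) * pdot w (p (k - h))
                       - zdot (k - h) (b h) * pdot w (q (k - h))) := by
  rw [inner_sub_right, inner_smul_right, inner_smul_right, inner_sum]
  congr 1
  · rw [inner_self_eq_norm_sq_to_K]; push_cast; norm_cast; rw [Complex.ofReal_mul]; rfl
  · congr 1
    refine Finset.sum_congr rfl fun h _ => ?_
    rw [inner_sub_right, inner_smul_right, inner_smul_right,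
        inner_leray _ _ _ hx, inner_leray _ _ _ hx,
        inner_eq_pdot x w _ hw, inner_eq_pdot x w _ hw]

end GalAux2


noncomputable section GalKey

local notation "⟪" x ", " y "⟫" => @inner ℂ _ _ x y

/-- The right-hand side of the `γ` equation. -/
def Dgam {d : ℕ} (ν : ℝ) (G : Finset (Fin d → ℤ))
    (γ β : (Fin d → ℤ) → ℝ → EuclideanSpace ℂ (Fin d)) (k : Fin d → ℤ) (t : ℝ) :
    EuclideanSpace ℂ (Fin d) :=
  ((-(ν * knormSq k) : ℝ) : ℂ) • γ k t
    - (Complex.I * ((((2 * Real.pi) ^ (-(d : ℝ) / 2) : ℝ)) : ℂ)) •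
      ∑ h ∈ G, (zdot (k - h) (γ h t) • leray k (γ (k - h) t)
                - zdot (k - h) (β h t) • leray k (β (k - h) t))

/-- The right-hand side of the `β` equation. -/
def Dbet {d : ℕ} (η : ℝ) (G : Finset (Fin d → ℤ))
    (γ β : (Fin d → ℤ) → ℝ → EuclideanSpace ℂ (Fin d)) (k : Fin d → ℤ) (t : ℝ) :
    EuclideanSpace ℂ (Fin d) :=
  ((-(η * knormSq k) : ℝ) : ℂ) • β k t
    - (Complex.I * ((((2 * Real.pi) ^ (-(d : ℝ) / 2) : ℝ)) : ℂ)) •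
      ∑ h ∈ G, (zdot (k - h) (γ h t) • leray k (β (k - h) t)
                - zdot (k - h) (β h t) • leray k (γ (k - h) t))

lemma key_deriv {d : ℕ} (ν η : ℝ) (G : Finset (Fin d → ℤ)) (hsym : ∀ k ∈ G, -k ∈ G)
    (T : EReal) (γ β : (Fin d → ℤ) → ℝ → EuclideanSpace ℂ (Fin d))
    (hsol : IsGalerkinSolution ν η G T γ β)
    (hreal : ∀ k ∈ G, ∀ t ∈ galDomain T,
      (∀ i, γ (-k) t i = starRingEnd ℂ (γ k t i)) ∧
      (∀ i, β (-k) t i = starRingEnd ℂ (β k t i)) ∧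
      zdot k (γ k t) = 0 ∧ zdot k (β k t) = 0)
    {t : ℝ} (ht : t ∈ galDomain T) :
    HasDerivWithinAt (fun s => ∑ k ∈ G, (‖γ k s‖ ^ 2 + ‖β k s‖ ^ 2))
      (-2 * ∑ k ∈ G, knormSq k * (ν * ‖γ k t‖ ^ 2 + η * ‖β k t‖ ^ 2)) (galDomain T) t := by
  obtain ⟨hsupp, hderiv⟩ := hsol
  have hγd : ∀ k ∈ G, HasDerivWithinAt (γ k) (Dgam ν G γ β k t) (galDomain T) t :=
    fun k hk => (hderiv k hk t ht).1
  have hβd : ∀ k ∈ G, HasDerivWithinAt (β k) (Dbet η G γ β k t) (galDomain T) t :=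
    fun k hk => (hderiv k hk t ht).2
  have mk1 : ∀ (f : ℝ → EuclideanSpace ℂ (Fin d)) (f' : EuclideanSpace ℂ (Fin d)),
      HasDerivWithinAt f f' (galDomain T) t →
      HasDerivWithinAt (fun s => ‖f s‖ ^ 2) ((⟪f t, f'⟫ + ⟪f', f t⟫).re) (galDomain T) t := by
    intro f f' hf
    have h1 := HasDerivWithinAt.inner (𝕜 := ℂ) hf hf
    have h2 := (Complex.reCLM.hasFDerivAt).comp_hasDerivWithinAt t h1
    have h3 : (Complex.reCLM ∘ fun s => ⟪f s, f s⟫) = fun s => ‖f s‖ ^ 2 := by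
      funext s
      show Complex.reCLM ⟪f s, f s⟫ = ‖f s‖ ^ 2
      rw [Complex.reCLM_apply, ← RCLike.re_to_complex]
      exact inner_self_eq_norm_sq _
    rw [h3] at h2
    simpa using h2
  have hAk : ∀ k ∈ G, HasDerivWithinAt (fun s => ‖γ k s‖ ^ 2 + ‖β k s‖ ^ 2)
      ((⟪γ k t, Dgam ν G γ β k t⟫ + ⟪Dgam ν G γ β k t, γ k t⟫).re
        + (⟪β k t, Dbet η G γ β k t⟫ + ⟪Dbet η G γ β k t, β k t⟫).re) (galDomain T) t :=
    fun k hk => (mk1 _ _ (hγd k hk)).add (mk1 _ _ (hβd k hk))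
  have Hsum := HasDerivWithinAt.sum hAk
  -- now identify the value
  have hγk : ∀ k ∈ G, ⟪γ k t, Dgam ν G γ β k t⟫
      = ((-(ν * knormSq k) * ‖γ k t‖ ^ 2 : ℝ) : ℂ)
        - (Complex.I * ((((2 * Real.pi) ^ (-(d : ℝ) / 2) : ℝ)) : ℂ)) *
          ∑ h ∈ G, (zdot (k - h) (γ h t) * pdot (γ (-k) t) (γ (k - h) t)
                    - zdot (k - h) (β h t) * pdot (γ (-k) t) (β (k - h) t)) := by
    intro k hk
    exact inner_rhs k G _ (-(ν * knormSq k)) (γ k t) (γ (-k) t)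
      (fun h => γ h t) (fun h => γ h t) (fun h => β h t) (fun h => β h t)
      (hreal k hk t ht).2.2.1 (hreal k hk t ht).1
  have hβk : ∀ k ∈ G, ⟪β k t, Dbet η G γ β k t⟫
      = ((-(η * knormSq k) * ‖β k t‖ ^ 2 : ℝ) : ℂ)
        - (Complex.I * ((((2 * Real.pi) ^ (-(d : ℝ) / 2) : ℝ)) : ℂ)) *
          ∑ h ∈ G, (zdot (k - h) (γ h t) * pdot (β (-k) t) (β (k - h) t)
                    - zdot (k - h) (β h t) * pdot (β (-k) t) (γ (k - h) t)) := by
    intro k hk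
    exact inner_rhs k G _ (-(η * knormSq k)) (β k t) (β (-k) t)
      (fun h => γ h t) (fun h => β h t) (fun h => β h t) (fun h => γ h t)
      (hreal k hk t ht).2.2.2 (hreal k hk t ht).2.1
  -- the nonlinear terms cancel
  have hzero : ∑ k ∈ G,
      ((∑ h ∈ G, (zdot (k - h) (γ h t) * pdot (γ (-k) t) (γ (k - h) t)
                  - zdot (k - h) (β h t) * pdot (γ (-k) t) (β (k - h) t)))
       + (∑ h ∈ G, (zdot (k - h) (γ h t) * pdot (β (-k) t) (β (k - h) t)
                  - zdot (k - h) (β h t) * pdot (β (-k) t) (γ (k - h) t)))) = 0 := by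
    have hg0 : ∀ k, k ∉ G → (fun m => γ m t) k = 0 := fun k hk => (hsupp k hk t).1
    have hb0 : ∀ k, k ∉ G → (fun m => β m t) k = 0 := fun k hk => (hsupp k hk t).2
    have hgdiv : ∀ h ∈ G, zdot h ((fun m => γ m t) h) = 0 :=
      fun h hh => (hreal h hh t ht).2.2.1
    have hbdiv : ∀ h ∈ G, zdot h ((fun m => β m t) h) = 0 :=
      fun h hh => (hreal h hh t ht).2.2.2
    have e : ∑ k ∈ G,
        ((∑ h ∈ G, (zdot (k - h) (γ h t) * pdot (γ (-k) t) (γ (k - h) t)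
                  - zdot (k - h) (β h t) * pdot (γ (-k) t) (β (k - h) t)))
        + (∑ h ∈ G, (zdot (k - h) (γ h t) * pdot (β (-k) t) (β (k - h) t)
                  - zdot (k - h) (β h t) * pdot (β (-k) t) (γ (k - h) t))))
        = (trilin G (fun m => γ m t) (fun m => γ m t) (fun m => γ m t)
            - trilin G (fun m => β m t) (fun m => β m t) (fun m => γ m t))
          + (trilin G (fun m => γ m t) (fun m => β m t) (fun m => β m t)
            - trilin G (fun m => β m t) (fun m => γ m t) (fun m => β m t)) := by
      unfold trilin
      simp only [Finset.sum_sub_distrib, Finset.sum_add_distrib]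
    rw [e]
    have h1 := trilin_skew hsym (fun m => γ m t) (fun m => γ m t) (fun m => γ m t) hg0 hg0 hgdiv
    have h2 := trilin_skew hsym (fun m => γ m t) (fun m => β m t) (fun m => β m t) hb0 hb0 hgdiv
    have h3 := trilin_skew hsym (fun m => β m t) (fun m => β m t) (fun m => γ m t) hb0 hg0 hbdiv
    linear_combination h1 / 2 + h2 / 2 - h3
  have hsum1 : ∑ k ∈ G, (⟪γ k t, Dgam ν G γ β k t⟫ + ⟪β k t, Dbet η G γ β k t⟫)
      = ((∑ k ∈ G, (-(knormSq k) * (ν * ‖γ k t‖ ^ 2 + η * ‖β k t‖ ^ 2)) : ℝ) : ℂ) := by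
    calc ∑ k ∈ G, (⟪γ k t, Dgam ν G γ β k t⟫ + ⟪β k t, Dbet η G γ β k t⟫)
        = ∑ k ∈ G, (((-(knormSq k) * (ν * ‖γ k t‖ ^ 2 + η * ‖β k t‖ ^ 2) : ℝ) : ℂ)
            - (Complex.I * ((((2 * Real.pi) ^ (-(d : ℝ) / 2) : ℝ)) : ℂ)) *
              ((∑ h ∈ G, (zdot (k - h) (γ h t) * pdot (γ (-k) t) (γ (k - h) t)
                  - zdot (k - h) (β h t) * pdot (γ (-k) t) (β (k - h) t)))
               + (∑ h ∈ G, (zdot (k - h) (γ h t) * pdot (β (-k) t) (β (k - h) t)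
                  - zdot (k - h) (β h t) * pdot (β (-k) t) (γ (k - h) t))))) := by
          refine Finset.sum_congr rfl fun k hk => ?_
          rw [hγk k hk, hβk k hk]
          push_cast
          ring
      _ = ((∑ k ∈ G, (-(knormSq k) * (ν * ‖γ k t‖ ^ 2 + η * ‖β k t‖ ^ 2)) : ℝ) : ℂ)
            - (Complex.I * ((((2 * Real.pi) ^ (-(d : ℝ) / 2) : ℝ)) : ℂ)) *
              ∑ k ∈ G,
              ((∑ h ∈ G, (zdot (k - h) (γ h t) * pdot (γ (-k) t) (γ (k - h) t)
                  - zdot (k - h) (β h t) * pdot (γ (-k) t) (β (k - h) t)))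
               + (∑ h ∈ G, (zdot (k - h) (γ h t) * pdot (β (-k) t) (β (k - h) t)
                  - zdot (k - h) (β h t) * pdot (β (-k) t) (γ (k - h) t)))) := by
          rw [Finset.sum_sub_distrib, ← Finset.mul_sum]
          push_cast
          ring
      _ = ((∑ k ∈ G, (-(knormSq k) * (ν * ‖γ k t‖ ^ 2 + η * ‖β k t‖ ^ 2)) : ℝ) : ℂ) := by
          rw [hzero, mul_zero, sub_zero]
  have hval : ∑ k ∈ G, ((⟪γ k t, Dgam ν G γ β k t⟫ + ⟪Dgam ν G γ β k t, γ k t⟫).re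
        + (⟪β k t, Dbet η G γ β k t⟫ + ⟪Dbet η G γ β k t, β k t⟫).re)
      = -2 * ∑ k ∈ G, knormSq k * (ν * ‖γ k t‖ ^ 2 + η * ‖β k t‖ ^ 2) := by
    have hre : ∀ k ∈ G, ((⟪γ k t, Dgam ν G γ β k t⟫ + ⟪Dgam ν G γ β k t, γ k t⟫).re
        + (⟪β k t, Dbet η G γ β k t⟫ + ⟪Dbet η G γ β k t, β k t⟫).re)
        = 2 * ((⟪γ k t, Dgam ν G γ β k t⟫ + ⟪β k t, Dbet η G γ β k t⟫).re) := by
      intro k _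
      rw [← inner_conj_symm (Dgam ν G γ β k t) (γ k t),
          ← inner_conj_symm (Dbet η G γ β k t) (β k t)]
      simp only [Complex.add_re, Complex.conj_re]
      ring
    rw [Finset.sum_congr rfl hre, ← Finset.mul_sum, ← Complex.re_sum, hsum1,
        Complex.ofReal_re]
    have hh : ∑ k ∈ G, -knormSq k * (ν * ‖γ k t‖ ^ 2 + η * ‖β k t‖ ^ 2)
        = - ∑ k ∈ G, knormSq k * (ν * ‖γ k t‖ ^ 2 + η * ‖β k t‖ ^ 2) := by
      rw [← Finset.sum_neg_distrib]
      exact Finset.sum_congr rfl fun k _ => by ring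
    rw [hh]; ring
  rw [hval] at Hsum
  have e : (∑ i ∈ G, fun s => ‖γ i s‖ ^ 2 + ‖β i s‖ ^ 2)
      = fun s => ∑ k ∈ G, (‖γ k s‖ ^ 2 + ‖β k s‖ ^ 2) := by
    funext s
    simp [Finset.sum_apply]
  rw [e] at Hsum
  exact Hsum

end GalKey

/-- energy identity and decay for Galerkin solutions, Proposition 6.5. -/
theorem galerkin_energy_decay
    {d : ℕ} (hd : 2 ≤ d) (ν η : ℝ) (hν : 0 ≤ ν) (hη : 0 ≤ η)
    (G : Finset (Fin d → ℤ)) (h0 : (0 : Fin d → ℤ) ∉ G) (hsym : ∀ k ∈ G, -k ∈ G)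
    (T : EReal) (hT : 0 < T)
    (γ β : (Fin d → ℤ) → ℝ → EuclideanSpace ℂ (Fin d))
    (hsol : IsGalerkinSolution ν η G T γ β)
    (hreal : ∀ k ∈ G, ∀ t ∈ galDomain T,
      (∀ i, γ (-k) t i = starRingEnd ℂ (γ k t i)) ∧
      (∀ i, β (-k) t i = starRingEnd ℂ (β k t i)) ∧
      zdot k (γ k t) = 0 ∧ zdot k (β k t) = 0) :
    ∀ t ∈ galDomain T,
      HasDerivWithinAt (fun s => ∑ k ∈ G, (‖γ k s‖ ^ 2 + ‖β k s‖ ^ 2))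
        (-2 * ∑ k ∈ G, knormSq k * (ν * ‖γ k t‖ ^ 2 + η * ‖β k t‖ ^ 2))
        (galDomain T) t ∧
      -2 * (∑ k ∈ G, knormSq k * (ν * ‖γ k t‖ ^ 2 + η * ‖β k t‖ ^ 2))
        ≤ -2 * min ν η * ∑ k ∈ G, (‖γ k t‖ ^ 2 + ‖β k t‖ ^ 2) ∧
      (∑ k ∈ G, (‖γ k t‖ ^ 2 + ‖β k t‖ ^ 2))
        ≤ (∑ k ∈ G, (‖γ k 0‖ ^ 2 + ‖β k 0‖ ^ 2)) * Real.exp (-2 * min ν η * t) ∧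
      (ν = 0 → η = 0 →
        (∑ k ∈ G, (‖γ k t‖ ^ 2 + ‖β k t‖ ^ 2)) = ∑ k ∈ G, (‖γ k 0‖ ^ 2 + ‖β k 0‖ ^ 2)) := by
  intro t ht
  have key : ∀ x ∈ galDomain T,
      HasDerivWithinAt (fun s => ∑ k ∈ G, (‖γ k s‖ ^ 2 + ‖β k s‖ ^ 2))
        (-2 * ∑ k ∈ G, knormSq k * (ν * ‖γ k x‖ ^ 2 + η * ‖β k x‖ ^ 2)) (galDomain T) x :=
    fun x hx => key_deriv ν η G hsym T γ β hsol hreal hx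
  have ineq : ∀ x ∈ galDomain T,
      -2 * (∑ k ∈ G, knormSq k * (ν * ‖γ k x‖ ^ 2 + η * ‖β k x‖ ^ 2))
        ≤ -2 * min ν η * ∑ k ∈ G, (‖γ k x‖ ^ 2 + ‖β k x‖ ^ 2) := by
    intro x _
    have hterm : ∀ k ∈ G, min ν η * (‖γ k x‖ ^ 2 + ‖β k x‖ ^ 2)
        ≤ knormSq k * (ν * ‖γ k x‖ ^ 2 + η * ‖β k x‖ ^ 2) := by
      intro k hk
      have hk0 : k ≠ 0 := fun h => h0 (h ▸ hk)
      have h1 : (1 : ℝ) ≤ knormSq k := one_le_knormSq hk0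
      have ha : (0:ℝ) ≤ ‖γ k x‖ ^ 2 := sq_nonneg _
      have hb : (0:ℝ) ≤ ‖β k x‖ ^ 2 := sq_nonneg _
      have hmν : min ν η ≤ ν := min_le_left _ _
      have hmη : min ν η ≤ η := min_le_right _ _
      nlinarith [mul_nonneg hν ha, mul_nonneg hη hb]
    have hs := Finset.sum_le_sum hterm
    rw [← Finset.mul_sum] at hs
    calc -2 * (∑ k ∈ G, knormSq k * (ν * ‖γ k x‖ ^ 2 + η * ‖β k x‖ ^ 2))
        ≤ -2 * (min ν η * ∑ k ∈ G, (‖γ k x‖ ^ 2 + ‖β k x‖ ^ 2)) := by linarith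
      _ = -2 * min ν η * ∑ k ∈ G, (‖γ k x‖ ^ 2 + ‖β k x‖ ^ 2) := by ring
  refine ⟨key t ht, ineq t ht, ?_, ?_⟩
  · -- exponential decay
    set m := min ν η with hmdef
    have hFd : ∀ x ∈ galDomain T, HasDerivWithinAt
        (fun s => (∑ k ∈ G, (‖γ k s‖ ^ 2 + ‖β k s‖ ^ 2)) * Real.exp (2 * m * s))
        ((-2 * ∑ k ∈ G, knormSq k * (ν * ‖γ k x‖ ^ 2 + η * ‖β k x‖ ^ 2)) * Real.exp (2 * m * x)
          + (∑ k ∈ G, (‖γ k x‖ ^ 2 + ‖β k x‖ ^ 2)) * (Real.exp (2 * m * x) * (2 * m * 1)))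
        (galDomain T) x := by
      intro x hx
      have hexp : HasDerivAt (fun s : ℝ => Real.exp (2 * m * s))
          (Real.exp (2 * m * x) * (2 * m * 1)) x :=
        (Real.hasDerivAt_exp (2 * m * x)).comp x ((hasDerivAt_id x).const_mul (2 * m))
      exact (key x hx).mul hexp.hasDerivWithinAt
    have hF'le : ∀ x ∈ galDomain T,
        ((-2 * ∑ k ∈ G, knormSq k * (ν * ‖γ k x‖ ^ 2 + η * ‖β k x‖ ^ 2)) * Real.exp (2 * m * x)
          + (∑ k ∈ G, (‖γ k x‖ ^ 2 + ‖β k x‖ ^ 2)) * (Real.exp (2 * m * x) * (2 * m * 1))) ≤ 0 := by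
      intro x hx
      have h1 := ineq x hx
      have h2 := (Real.exp_pos (2 * m * x)).le
      nlinarith [mul_le_mul_of_nonneg_right h1 h2]
    have h1 := decay_helper hFd hF'le ht
    have hexp0 : Real.exp (2 * m * 0) = 1 := by norm_num
    rw [hexp0, mul_one] at h1
    have h3 := mul_le_mul_of_nonneg_right h1 (Real.exp_pos (-(2 * m * t))).le
    have he : -(2 * m * t) = -2 * m * t := by ring
    calc (∑ k ∈ G, (‖γ k t‖ ^ 2 + ‖β k t‖ ^ 2))
        = (∑ k ∈ G, (‖γ k t‖ ^ 2 + ‖β k t‖ ^ 2)) * Real.exp (2 * m * t)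
            * Real.exp (-(2 * m * t)) := by
          rw [mul_assoc, ← Real.exp_add]; norm_num
      _ ≤ (∑ k ∈ G, (‖γ k 0‖ ^ 2 + ‖β k 0‖ ^ 2)) * Real.exp (-(2 * m * t)) := h3
      _ = (∑ k ∈ G, (‖γ k 0‖ ^ 2 + ‖β k 0‖ ^ 2)) * Real.exp (-2 * m * t) := by rw [he]
  · -- conservation when ν = η = 0
    intro hν0 hη0
    have hzero' : ∀ x ∈ galDomain T,
        (-2 * ∑ k ∈ G, knormSq k * (ν * ‖γ k x‖ ^ 2 + η * ‖β k x‖ ^ 2)) = 0 := by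
      intro x _
      simp [hν0, hη0]
    have hle : (∑ k ∈ G, (‖γ k t‖ ^ 2 + ‖β k t‖ ^ 2)) ≤ ∑ k ∈ G, (‖γ k 0‖ ^ 2 + ‖β k 0‖ ^ 2) :=
      decay_helper key (fun x hx => le_of_eq (hzero' x hx)) ht
    have hneg : ∀ x ∈ galDomain T, HasDerivWithinAt
        (fun s => -(∑ k ∈ G, (‖γ k s‖ ^ 2 + ‖β k s‖ ^ 2)))
        (-(-2 * ∑ k ∈ G, knormSq k * (ν * ‖γ k x‖ ^ 2 + η * ‖β k x‖ ^ 2))) (galDomain T) x :=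
      fun x hx => (key x hx).neg
    have hge := decay_helper hneg (fun x hx => by rw [hzero' x hx]; norm_num) ht
    have : (∑ k ∈ G, (‖γ k 0‖ ^ 2 + ‖β k 0‖ ^ 2)) ≤ ∑ k ∈ G, (‖γ k t‖ ^ 2 + ‖β k t‖ ^ 2) := by
      simpa using hge
    linarith
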